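/- For any finite posets P and Q on d elements, Ω(O_P, C_Q) is a Gorenstein Fano (reflexive) polytope of dimension d+1. -/

import Mathlib

def orderPolytope {d : ℕ} (r : Fin d → Fin d → Prop) : Set (Fin d → ℝ) :=
  {x | (∀ i, 0 ≤ x i ∧ x i ≤ 1) ∧ ∀ i j, r i j → x j ≤ x i}

def chainPolytope {d : ℕ} (r : Fin d → Fin d → Prop) : Set (Fin d → ℝ) :=
  {x | (∀ i, 0 ≤ x i) ∧
    ∀ c : Finset (Fin d), IsMaxChain r (c : Set (Fin d)) → ∑ i ∈ c, x i ≤ 1}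

def OmegaPoly {d : ℕ} (A B : Set (Fin d → ℝ)) : Set (Fin (d + 1) → ℝ) :=
  convexHull ℝ
    (((fun x => Fin.snoc x (1 : ℝ)) '' A) ∪ ((fun x => Fin.snoc (-x) (-1 : ℝ)) '' B))

def dualPoly {n : ℕ} (S : Set (Fin n → ℝ)) : Set (Fin n → ℝ) :=
  {x | ∀ y ∈ S, ∑ i, x i * y i ≤ 1}

def IsLatticePoint {n : ℕ} (x : Fin n → ℝ) : Prop := ∀ i, ∃ z : ℤ, x i = z


noncomputable section OmegaAux
open Finset
open scoped Classical

namespace OmegaAux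

variable {d : ℕ}

inductive WI (d : ℕ) : Type where
  | top : WI d
  | bot : WI d
  | upper : Fin d → WI d
  | lower : Fin d → WI d
  | pair : Fin d → Fin d → WI d
  | chain : Finset (Fin d) → Finset (Fin d) → (Fin d → Fin d) → WI d
  deriving Fintype, DecidableEq

def wFun (rP rQ : Fin d → Fin d → Prop) : WI d → (Fin (d + 1) → ℝ)
  | .top => Fin.snoc 0 1
  | .bot => Fin.snoc 0 (-1)
  | .upper i => Fin.snoc (fun k => if k = i then 2 else 0) (-1)
  | .lower i => Fin.snoc (fun k => if k = i then -2 else 0) 1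
  | .pair i j =>
      if rP i j then
        Fin.snoc (fun k => (if k = j then (2:ℝ) else 0) + (if k = i then -2 else 0)) 1
      else Fin.snoc 0 1
  | .chain c S j =>
      if IsMaxChain rQ (c : Set (Fin d)) ∧ S ⊆ c ∧ ∀ i ∈ S, rP i (j i) then
        Fin.snoc
          (fun k => 2 * ((∑ i ∈ S, if j i = k then (1:ℝ) else 0) - (if k ∈ c then 1 else 0))) 1
      else Fin.snoc 0 1

def dotp {n : ℕ} (w z : Fin n → ℝ) : ℝ := ∑ i, w i * z i

lemma dotp_snoc (a x : Fin d → ℝ) (b t : ℝ) :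
    dotp (Fin.snoc a b) (Fin.snoc x t) = (∑ i, a i * x i) + b * t := by
  unfold dotp
  rw [Fin.sum_univ_castSucc]
  simp

lemma sum_single_mul (c : ℝ) (i : Fin d) (x : Fin d → ℝ) :
    (∑ k, (if k = i then c else 0) * x k) = c * x i := by
  rw [Finset.sum_eq_single i] <;> simp +contextual

lemma dotp_top (x : Fin d → ℝ) (t : ℝ) (rP rQ : Fin d → Fin d → Prop) :
    dotp (wFun rP rQ .top) (Fin.snoc x t) = t := by
  simp [wFun, dotp_snoc]

lemma dotp_bot (x : Fin d → ℝ) (t : ℝ) (rP rQ : Fin d → Fin d → Prop) :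
    dotp (wFun rP rQ .bot) (Fin.snoc x t) = -t := by
  simp [wFun, dotp_snoc]

lemma dotp_upper (x : Fin d → ℝ) (t : ℝ) (rP rQ : Fin d → Fin d → Prop) (i : Fin d) :
    dotp (wFun rP rQ (.upper i)) (Fin.snoc x t) = 2 * x i - t := by
  simp [wFun, dotp_snoc, sum_single_mul]; ring

lemma dotp_lower (x : Fin d → ℝ) (t : ℝ) (rP rQ : Fin d → Fin d → Prop) (i : Fin d) :
    dotp (wFun rP rQ (.lower i)) (Fin.snoc x t) = -(2 * x i) + t := by
  simp [wFun, dotp_snoc, sum_single_mul]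

lemma dotp_pair (x : Fin d → ℝ) (t : ℝ) (rP rQ : Fin d → Fin d → Prop) {i j : Fin d}
    (h : rP i j) :
    dotp (wFun rP rQ (.pair i j)) (Fin.snoc x t) = 2 * x j - 2 * x i + t := by
  simp only [wFun, if_pos h, dotp_snoc]
  simp [add_mul, Finset.sum_add_distrib, sum_single_mul]; ring

lemma dotp_chain (x : Fin d → ℝ) (t : ℝ) (rP rQ : Fin d → Fin d → Prop)
    {c S : Finset (Fin d)} {j : Fin d → Fin d}
    (h : IsMaxChain rQ (c : Set (Fin d)) ∧ S ⊆ c ∧ ∀ i ∈ S, rP i (j i)) :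
    dotp (wFun rP rQ (.chain c S j)) (Fin.snoc x t)
      = 2 * ((∑ i ∈ S, x (j i)) - ∑ k ∈ c, x k) + t := by
  simp only [wFun, if_pos h, dotp_snoc, one_mul]
  congr 1
  have h1 : (∑ k, (∑ i ∈ S, if j i = k then (1:ℝ) else 0) * x k)
      = ∑ i ∈ S, x (j i) := by
    simp only [Finset.sum_mul]
    rw [Finset.sum_comm]
    refine Finset.sum_congr rfl fun i _ => ?_
    simp [ite_mul]
  have h2 : (∑ k, (if k ∈ c then (1:ℝ) else 0) * x k) = ∑ k ∈ c, x k := by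
    simp [ite_mul]
  calc (∑ k, 2 * ((∑ i ∈ S, if j i = k then (1:ℝ) else 0) - (if k ∈ c then 1 else 0)) * x k)
      = 2 * ((∑ k, (∑ i ∈ S, if j i = k then (1:ℝ) else 0) * x k)
          - (∑ k, (if k ∈ c then (1:ℝ) else 0) * x k)) := by
        rw [← Finset.sum_sub_distrib, Finset.mul_sum]
        refine Finset.sum_congr rfl fun k _ => by ring
    _ = 2 * ((∑ i ∈ S, x (j i)) - ∑ k ∈ c, x k) := by rw [h1, h2]


lemma chain_coord_le_one {rQ : Fin d → Fin d → Prop} {q : Fin d → ℝ}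
    (hq : q ∈ chainPolytope rQ) (i : Fin d) : q i ≤ 1 := by
  have hchain : IsChain rQ ({i} : Set (Fin d)) := by
    intro a ha b hb hab
    simp only [Set.mem_singleton_iff] at ha hb
    exact absurd (ha.trans hb.symm) hab
  obtain ⟨M, hM, hiM⟩ := hchain.exists_maxChain
  have hMfin : M.Finite := Set.Finite.subset (Set.finite_univ) (Set.subset_univ _)
  have hcoe : (hMfin.toFinset : Set (Fin d)) = M := hMfin.coe_toFinset
  have hsum := hq.2 hMfin.toFinset (by rw [hcoe]; exact hM)
  have hmem : i ∈ hMfin.toFinset := by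
    rw [Set.Finite.mem_toFinset]; exact hiM rfl
  exact le_trans (Finset.single_le_sum (fun k _ => hq.1 k) hmem) hsum

lemma valid_on_top {rP rQ : Fin d → Fin d → Prop} {p : Fin d → ℝ}
    (hp : p ∈ orderPolytope rP) (idx : WI d) :
    dotp (wFun rP rQ idx) (Fin.snoc p 1) ≤ 1 := by
  obtain ⟨hp01, hpord⟩ := hp
  cases idx with
  | top => rw [dotp_top]
  | bot => rw [dotp_bot]; norm_num
  | upper i => rw [dotp_upper]; have := (hp01 i).2; linarith
  | lower i => rw [dotp_lower]; have := (hp01 i).1; linarith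
  | pair i j =>
      by_cases h : rP i j
      · rw [dotp_pair _ _ _ _ h]
        have := hpord i j h
        linarith
      · simp only [wFun, if_neg h, dotp_snoc]; simp
  | chain c S j =>
      by_cases h : IsMaxChain rQ (c : Set (Fin d)) ∧ S ⊆ c ∧ ∀ i ∈ S, rP i (j i)
      · rw [dotp_chain _ _ _ _ h]
        have h1 : (∑ i ∈ S, p (j i)) ≤ ∑ i ∈ S, p i :=
          Finset.sum_le_sum fun i hi => hpord i (j i) (h.2.2 i hi)
        have h2 : (∑ i ∈ S, p i) ≤ ∑ i ∈ c, p i :=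
          Finset.sum_le_sum_of_subset_of_nonneg h.2.1 fun i _ _ => (hp01 i).1
        linarith
      · simp only [wFun, if_neg h, dotp_snoc]; simp

lemma valid_on_bot {rP rQ : Fin d → Fin d → Prop} {q : Fin d → ℝ}
    (hq : q ∈ chainPolytope rQ) (idx : WI d) :
    dotp (wFun rP rQ idx) (Fin.snoc (-q) (-1)) ≤ 1 := by
  have hq0 := hq.1
  cases idx with
  | top => rw [dotp_top]; norm_num
  | bot => rw [dotp_bot]; norm_num
  | upper i => rw [dotp_upper]; have := hq0 i; simp only [Pi.neg_apply]; linarith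
  | lower i =>
      rw [dotp_lower]
      have := chain_coord_le_one hq i
      simp only [Pi.neg_apply]; linarith
  | pair i j =>
      by_cases h : rP i j
      · rw [dotp_pair _ _ _ _ h]
        have h1 := hq0 j
        have h2 := chain_coord_le_one hq i
        simp only [Pi.neg_apply]; linarith
      · simp only [wFun, if_neg h, dotp_snoc]; simp
  | chain c S j =>
      by_cases h : IsMaxChain rQ (c : Set (Fin d)) ∧ S ⊆ c ∧ ∀ i ∈ S, rP i (j i)
      · rw [dotp_chain _ _ _ _ h]
        have h1 : (0:ℝ) ≤ ∑ i ∈ S, q (j i) := Finset.sum_nonneg fun i _ => hq0 (j i)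
        have h2 : (∑ k ∈ c, q k) ≤ 1 := hq.2 c h.1
        have e1 : (∑ i ∈ S, (-q) (j i)) = -∑ i ∈ S, q (j i) := by
          simp [Finset.sum_neg_distrib]
        have e2 : (∑ k ∈ c, (-q) k) = -∑ k ∈ c, q k := by
          simp [Finset.sum_neg_distrib]
        rw [e1, e2]
        linarith
      · simp only [wFun, if_neg h, dotp_snoc]; simp

lemma dotp_isLinearMap {n : ℕ} (w : Fin n → ℝ) :
    IsLinearMap ℝ (fun z : Fin n → ℝ => dotp w z) := by
  constructor
  · intro a b
    unfold dotp
    rw [← Finset.sum_add_distrib]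
    exact Finset.sum_congr rfl fun i _ => by simp [mul_add]
  · intro c a
    unfold dotp
    rw [Finset.smul_sum]
    exact Finset.sum_congr rfl fun i _ => by simp [Pi.smul_apply, smul_eq_mul]; ring

lemma valid (rP rQ : Fin d → Fin d → Prop) (idx : WI d) :
    ∀ z ∈ OmegaPoly (orderPolytope rP) (chainPolytope rQ), dotp (wFun rP rQ idx) z ≤ 1 := by
  intro z hz
  have hconv : Convex ℝ {z : Fin (d+1) → ℝ | dotp (wFun rP rQ idx) z ≤ 1} :=
    convex_halfSpace_le (dotp_isLinearMap _) 1
  refine convexHull_min ?_ hconv hz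
  rintro y (⟨p, hp, rfl⟩ | ⟨q, hq, rfl⟩)
  · exact valid_on_top hp idx
  · exact valid_on_bot hq idx

lemma complete {rP rQ : Fin d → Fin d → Prop} (hrefl : ∀ i, rP i i)
    (htrans : ∀ {i j k : Fin d}, rP i j → rP j k → rP i k)
    (z : Fin (d + 1) → ℝ) (hz : ∀ idx : WI d, dotp (wFun rP rQ idx) z ≤ 1) :
    z ∈ OmegaPoly (orderPolytope rP) (chainPolytope rQ) := by
  set x : Fin d → ℝ := Fin.init z with hxdef
  set t : ℝ := z (Fin.last d) with htdef
  have hzs : z = Fin.snoc x t := (Fin.snoc_init_self z).symm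
  have htop : t ≤ 1 := by have := hz .top; rwa [hzs, dotp_top] at this
  have hbot : -t ≤ 1 := by have := hz .bot; rwa [hzs, dotp_bot] at this
  have hup : ∀ i, 2 * x i - t ≤ 1 := fun i => by
    have := hz (.upper i); rwa [hzs, dotp_upper] at this
  have hlo : ∀ i, -(2 * x i) + t ≤ 1 := fun i => by
    have := hz (.lower i); rwa [hzs, dotp_lower] at this
  have hpair : ∀ i j, rP i j → 2 * x j - 2 * x i + t ≤ 1 := fun i j h => by
    have := hz (.pair i j); rwa [hzs, dotp_pair _ _ _ _ h] at this
  have hch : ∀ (c S : Finset (Fin d)) (j : Fin d → Fin d),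
      (IsMaxChain rQ (c : Set (Fin d)) ∧ S ⊆ c ∧ ∀ i ∈ S, rP i (j i)) →
      2 * ((∑ i ∈ S, x (j i)) - ∑ k ∈ c, x k) + t ≤ 1 := fun c S j h => by
    have := hz (.chain c S j); rwa [hzs, dotp_chain _ _ _ _ h] at this
  set lam : ℝ := (1 + t) / 2 with hlamdef
  set mu : ℝ := (1 - t) / 2 with hmudef
  have hlam0 : 0 ≤ lam := by rw [hlamdef]; linarith
  have hmu0 : 0 ≤ mu := by rw [hmudef]; linarith
  have hlm : lam + mu = 1 := by rw [hlamdef, hmudef]; ring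
  suffices h : ∃ p q, p ∈ orderPolytope rP ∧ q ∈ chainPolytope rQ ∧
      ∀ i, lam * p i - mu * q i = x i by
    obtain ⟨p, q, hp, hq, hpq⟩ := h
    have hzc : z = lam • (Fin.snoc p (1:ℝ) : Fin (d+1) → ℝ) + mu • (Fin.snoc (-q) (-1:ℝ) : Fin (d+1) → ℝ) := by
      rw [hzs]; funext k
      refine Fin.lastCases ?_ (fun i => ?_) k
      · simp only [Fin.snoc_last, Pi.add_apply, Pi.smul_apply, smul_eq_mul]
        rw [hlamdef, hmudef]; ring
      · simp only [Fin.snoc_castSucc, Pi.add_apply, Pi.smul_apply, smul_eq_mul,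
          Pi.neg_apply]
        have := hpq i
        linarith
    rw [hzc]
    have hA : (Fin.snoc p (1:ℝ) : Fin (d+1) → ℝ) ∈
        (((fun x => Fin.snoc x (1 : ℝ)) '' orderPolytope rP) ∪
          ((fun x => Fin.snoc (-x) (-1 : ℝ)) '' chainPolytope rQ)) := Or.inl ⟨p, hp, rfl⟩
    have hB : (Fin.snoc (-q) (-1:ℝ) : Fin (d+1) → ℝ) ∈
        (((fun x => Fin.snoc x (1 : ℝ)) '' orderPolytope rP) ∪
          ((fun x => Fin.snoc (-x) (-1 : ℝ)) '' chainPolytope rQ)) := Or.inr ⟨q, hq, rfl⟩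
    exact (convex_convexHull ℝ _) (subset_convexHull ℝ _ hA) (subset_convexHull ℝ _ hB)
      hlam0 hmu0 hlm
  by_cases hmu : mu = 0
  · -- t = 1 : the point is at the top level
    have ht1 : t = 1 := by rw [hmudef] at hmu; linarith [hmu]
    have hlam1 : lam = 1 := by rw [hlamdef, ht1]; norm_num
    refine ⟨x, 0, ⟨fun i => ⟨?_, ?_⟩, fun i j hij => ?_⟩, ⟨fun i => le_refl 0, fun c _ => ?_⟩, fun i => ?_⟩
    · have := hlo i; linarith [ht1 ▸ this]
    · have := hup i; rw [ht1] at this; linarith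
    · have := hpair i j hij; rw [ht1] at this; linarith
    · simp
    · rw [hlam1, hmu]; simp
  · have hmupos : 0 < mu := lt_of_le_of_ne hmu0 (Ne.symm hmu)
    have hUne : ∀ i : Fin d, (univ.filter (fun j => rP i j)).Nonempty := fun i =>
      ⟨i, by simp [hrefl i]⟩
    set M : Fin d → ℝ := fun i => (univ.filter (fun j => rP i j)).sup' (hUne i) x with hMdef
    have hxM : ∀ i, x i ≤ M i := fun i => Finset.le_sup' x (by simp [hrefl i])
    have hMmono : ∀ i k, rP i k → M k ≤ M i := by
      intro i k hik
      apply Finset.sup'_le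
      intro j hj
      simp only [Finset.mem_filter] at hj
      exact Finset.le_sup' x (by simp [htrans hik hj.2])
    have hjex : ∀ i, ∃ j, rP i j ∧ M i = x j := by
      intro i
      obtain ⟨j, hj, hje⟩ := Finset.exists_mem_eq_sup' (hUne i) x
      exact ⟨j, (Finset.mem_filter.mp hj).2, hje⟩
    choose jf hjf1 hjf2 using hjex
    set p : Fin d → ℝ := fun i => min 1 (max 0 (M i) / lam) with hpdef
    have hxlam : ∀ i, x i ≤ lam := fun i => by
      have := hup i; rw [hlamdef]; linarith
    have hppos : ∀ i, 0 ≤ p i := fun i =>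
      le_min zero_le_one (div_nonneg (le_max_left _ _) hlam0)
    have hple : ∀ i, p i ≤ 1 := fun i => min_le_left _ _
    have hdivmono : ∀ a b : ℝ, a ≤ b → a / lam ≤ b / lam := by
      intro a b hab
      rcases eq_or_lt_of_le hlam0 with h0 | h0
      · rw [← h0]; simp
      · exact (div_le_div_iff_of_pos_right h0).mpr hab
    have hpord : ∀ i k, rP i k → p k ≤ p i := fun i k h =>
      min_le_min le_rfl (hdivmono _ _ (max_le_max le_rfl (hMmono i k h)))
    have key1 : ∀ i, x i ≤ lam * p i := by
      intro i
      rcases le_or_gt (x i) 0 with h | h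
      · exact h.trans (mul_nonneg hlam0 (hppos i))
      · have hlampos : 0 < lam := lt_of_lt_of_le h (hxlam i)
        have he : lam * p i = min lam (max 0 (M i)) := by
          rw [hpdef]
          rw [mul_min_of_nonneg _ _ hlam0, mul_one,
            mul_div_cancel₀ _ (ne_of_gt hlampos)]
        rw [he]
        exact le_min (hxlam i) ((hxM i).trans (le_max_right _ _))
    have key2a : ∀ i, lam * p i ≤ lam := fun i =>
      mul_le_of_le_one_right hlam0 (hple i)
    have key2b : ∀ i, lam * p i ≤ max 0 (M i) := by
      intro i
      rcases eq_or_lt_of_le hlam0 with h0 | h0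
      · rw [← h0, zero_mul]; exact le_max_left _ _
      · calc lam * p i ≤ lam * (max 0 (M i) / lam) :=
              mul_le_mul_of_nonneg_left (min_le_right _ _) hlam0
          _ = max 0 (M i) := mul_div_cancel₀ _ (ne_of_gt h0)
    set q : Fin d → ℝ := fun i => (lam * p i - x i) / mu with hqdef
    have hq0 : ∀ i, 0 ≤ q i := fun i =>
      div_nonneg (by linarith [key1 i]) hmupos.le
    have hqchain : ∀ c : Finset (Fin d), IsMaxChain rQ (c : Set (Fin d)) →
        ∑ i ∈ c, q i ≤ 1 := by
      intro c hc
      have hterm : ∀ i ∈ c, lam * p i - x i ≤ (if 0 < M i then x (jf i) else 0) - x i := by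
        intro i _
        by_cases hMi : 0 < M i
        · rw [if_pos hMi]
          have h1 : max 0 (M i) = M i := max_eq_right hMi.le
          have h2 := key2b i
          rw [h1, hjf2 i] at h2
          linarith
        · rw [if_neg hMi]
          have h1 : max 0 (M i) = 0 := max_eq_left (not_lt.mp hMi)
          have h2 := key2b i
          rw [h1] at h2
          linarith
      have hsum1 : (∑ i ∈ c, (lam * p i - x i)) ≤
          ∑ i ∈ c, ((if 0 < M i then x (jf i) else 0) - x i) :=
        Finset.sum_le_sum hterm
      have hsum2 : (∑ i ∈ c, ((if 0 < M i then x (jf i) else 0) - x i)) =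
          (∑ i ∈ c.filter (fun i => 0 < M i), x (jf i)) - ∑ i ∈ c, x i := by
        rw [Finset.sum_sub_distrib]
        congr 1
        rw [Finset.sum_filter]
      have hWc := hch c (c.filter (fun i => 0 < M i)) jf
        ⟨hc, Finset.filter_subset _ _, fun i _ => hjf1 i⟩
      have hmain : (∑ i ∈ c, (lam * p i - x i)) ≤ mu := by
        rw [hmudef]
        rw [hsum2] at hsum1
        linarith
      have : (∑ i ∈ c, q i) = (∑ i ∈ c, (lam * p i - x i)) / mu := by
        rw [Finset.sum_div]
      rw [this]
      rw [div_le_one hmupos]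
      exact hmain
    refine ⟨p, q, ⟨fun i => ⟨hppos i, hple i⟩, hpord⟩, ⟨hq0, hqchain⟩, fun i => ?_⟩
    rw [hqdef]
    field_simp
    ring

lemma lattice_snoc {a : Fin d → ℝ} {b : ℝ} (ha : ∀ i, ∃ z : ℤ, a i = z)
    (hb : ∃ z : ℤ, b = z) : IsLatticePoint (Fin.snoc a b : Fin (d+1) → ℝ) := by
  intro k
  refine Fin.lastCases ?_ (fun i => ?_) k
  · rw [Fin.snoc_last]; exact hb
  · rw [Fin.snoc_castSucc]; exact ha i

lemma wFun_lattice (rP rQ : Fin d → Fin d → Prop) (idx : WI d) :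
    IsLatticePoint (wFun rP rQ idx) := by
  cases idx with
  | top => exact lattice_snoc (fun i => ⟨0, by simp⟩) ⟨1, by simp⟩
  | bot => exact lattice_snoc (fun i => ⟨0, by simp⟩) ⟨-1, by simp⟩
  | upper i =>
      simp only [wFun]
      exact lattice_snoc (fun k => ⟨if k = i then 2 else 0, by split <;> simp⟩) ⟨-1, by simp⟩
  | lower i =>
      simp only [wFun]
      exact lattice_snoc (fun k => ⟨if k = i then -2 else 0, by split <;> simp⟩) ⟨1, by simp⟩
  | pair i j =>
      by_cases h : rP i j
      · simp only [wFun, if_pos h]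
        exact lattice_snoc (fun k =>
          ⟨(if k = j then 2 else 0) + (if k = i then -2 else 0), by split <;> split <;> simp⟩)
          ⟨1, by simp⟩
      · simp only [wFun, if_neg h]
        exact lattice_snoc (fun i => ⟨0, by simp⟩) ⟨1, by simp⟩
  | chain c S j =>
      by_cases h : IsMaxChain rQ (c : Set (Fin d)) ∧ S ⊆ c ∧ ∀ i ∈ S, rP i (j i)
      · simp only [wFun, if_pos h]
        refine lattice_snoc (fun k =>
          ⟨2 * ((∑ i ∈ S, if j i = k then (1:ℤ) else 0) - (if k ∈ c then 1 else 0)), ?_⟩)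
          ⟨1, by simp⟩
        have hs : (∑ i ∈ S, if j i = k then (1:ℝ) else 0)
            = ((∑ i ∈ S, if j i = k then (1:ℤ) else 0 : ℤ) : ℝ) := by
          push_cast
          exact Finset.sum_congr rfl fun i _ => by split <;> simp
        have hc2 : ((if k ∈ c then 1 else 0 : ℝ)) = (((if k ∈ c then 1 else 0 : ℤ)) : ℝ) := by
          split <;> simp
        rw [hs, hc2]
        push_cast
        ring
      · simp only [wFun, if_neg h]
        exact lattice_snoc (fun i => ⟨0, by simp⟩) ⟨1, by simp⟩

lemma wFun_last (rP rQ : Fin d → Fin d → Prop) (idx : WI d) :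
    wFun rP rQ idx (Fin.last d) = 1 ∨ wFun rP rQ idx (Fin.last d) = -1 := by
  cases idx with
  | top => left; simp [wFun]
  | bot => right; simp [wFun]
  | upper i => right; simp [wFun]
  | lower i => left; simp [wFun]
  | pair i j =>
      left
      by_cases h : rP i j
      · simp only [wFun, if_pos h, Fin.snoc_last]
      · simp only [wFun, if_neg h, Fin.snoc_last]
  | chain c S j =>
      left
      by_cases h : IsMaxChain rQ (c : Set (Fin d)) ∧ S ⊆ c ∧ ∀ i ∈ S, rP i (j i)
      · simp only [wFun, if_pos h, Fin.snoc_last]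
      · simp only [wFun, if_neg h, Fin.snoc_last]

lemma wFun_self_ge_one (rP rQ : Fin d → Fin d → Prop) (idx : WI d) :
    1 ≤ dotp (wFun rP rQ idx) (wFun rP rQ idx) := by
  set w := wFun rP rQ idx with hw
  have h1 : w (Fin.last d) * w (Fin.last d) = 1 := by
    rcases wFun_last rP rQ idx with h | h <;> rw [← hw] at h <;> rw [h] <;> norm_num
  calc (1:ℝ) = w (Fin.last d) * w (Fin.last d) := h1.symm
    _ ≤ ∑ i, w i * w i :=
        Finset.single_le_sum (fun i _ => mul_self_nonneg (w i)) (Finset.mem_univ _)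

lemma dotp_int {n : ℕ} {w z : Fin n → ℝ} (hw : IsLatticePoint w) (hz : IsLatticePoint z) :
    ∃ k : ℤ, dotp w z = k := by
  choose zw hzw using hw
  choose zz hzz using hz
  refine ⟨∑ i, zw i * zz i, ?_⟩
  unfold dotp
  push_cast
  exact Finset.sum_congr rfl fun i _ => by rw [hzw i, hzz i]

lemma dotp_continuous {n : ℕ} (w : Fin n → ℝ) : Continuous fun z : Fin n → ℝ => dotp w z := by
  unfold dotp
  exact continuous_finset_sum _ fun i _ => continuous_const.mul (continuous_apply i)

lemma interior_strict {rP rQ : Fin d → Fin d → Prop} {z : Fin (d+1) → ℝ}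
    (hz : z ∈ interior (OmegaPoly (orderPolytope rP) (chainPolytope rQ))) (idx : WI d) :
    dotp (wFun rP rQ idx) z < 1 := by
  set w := wFun rP rQ idx with hw
  rcases lt_or_eq_of_le (valid rP rQ idx z (interior_subset hz)) with h | h
  · exact h
  exfalso
  obtain ⟨ε, hε, hball⟩ := Metric.mem_nhds_iff.mp (mem_interior_iff_mem_nhds.mp hz)
  set δ : ℝ := ε / (2 * (‖w‖ + 1)) with hδdef
  have hnw : (0:ℝ) ≤ ‖w‖ := norm_nonneg w
  have hδpos : 0 < δ := div_pos hε (by positivity)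
  have hmem : z + δ • w ∈ OmegaPoly (orderPolytope rP) (chainPolytope rQ) := by
    apply hball
    rw [Metric.mem_ball, dist_eq_norm, add_sub_cancel_left, norm_smul]
    have h1 : ‖δ‖ = δ := abs_of_pos hδpos
    rw [h1]
    have h2 : δ * ‖w‖ ≤ δ * (‖w‖ + 1) := by nlinarith
    have h3 : δ * (‖w‖ + 1) = ε / 2 := by
      rw [hδdef]; field_simp
    linarith
  have hval := valid rP rQ idx _ hmem
  have hlin := dotp_isLinearMap (n := d+1) w
  have hexp : dotp w (z + δ • w) = dotp w z + δ * dotp w w := by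
    rw [hlin.map_add, hlin.map_smul]; simp [smul_eq_mul]
  rw [hexp, ← h] at hval
  have hsq := wFun_self_ge_one rP rQ idx
  rw [← hw] at hsq
  nlinarith

lemma zero_interior (rP rQ : Fin d → Fin d → Prop) (hrefl : ∀ i, rP i i)
    (htrans : ∀ {i j k : Fin d}, rP i j → rP j k → rP i k) :
    (0 : Fin (d+1) → ℝ) ∈ interior (OmegaPoly (orderPolytope rP) (chainPolytope rQ)) := by
  set U : Set (Fin (d+1) → ℝ) := ⋂ idx : WI d, {z | dotp (wFun rP rQ idx) z < 1} with hU
  have hUopen : IsOpen U :=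
    isOpen_iInter_of_finite fun idx => isOpen_lt (dotp_continuous _) continuous_const
  have hUsub : U ⊆ OmegaPoly (orderPolytope rP) (chainPolytope rQ) := by
    intro z hzU
    refine complete hrefl htrans z fun idx => le_of_lt ?_
    exact Set.mem_iInter.mp hzU idx
  have h0U : (0 : Fin (d+1) → ℝ) ∈ U := by
    refine Set.mem_iInter.mpr fun idx => ?_
    show dotp (wFun rP rQ idx) 0 < 1
    have : dotp (wFun rP rQ idx) 0 = 0 := by simp [dotp]
    rw [this]; norm_num
  exact interior_maximal hUsub hUopen h0U

lemma dotp_eval_init {n : ℕ} (a : Fin n → ℝ) (b : ℝ) (z : Fin (n+1) → ℝ) :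
    dotp (Fin.snoc a b) z = (∑ i, a i * Fin.init z i) + b * z (Fin.last n) := by
  conv_lhs => rw [← Fin.snoc_init_self z]
  rw [dotp_snoc]

lemma main (rP rQ : Fin d → Fin d → Prop) (hrefl : ∀ i, rP i i)
    (htrans : ∀ {i j k : Fin d}, rP i j → rP j k → rP i k) :
    affineSpan ℝ (OmegaPoly (orderPolytope rP) (chainPolytope rQ)) = ⊤ ∧
    interior (OmegaPoly (orderPolytope rP) (chainPolytope rQ)) ∩
        {x : Fin (d + 1) → ℝ | IsLatticePoint x} = {0} ∧
    ∃ V : Finset (Fin (d + 1) → ℝ), (∀ v ∈ V, IsLatticePoint v) ∧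
      dualPoly (OmegaPoly (orderPolytope rP) (chainPolytope rQ)) =
        convexHull ℝ (V : Set (Fin (d + 1) → ℝ)) := by
  have h0int := zero_interior rP rQ hrefl htrans
  refine ⟨?_, ?_, ?_⟩
  · -- full dimensional
    show affineSpan ℝ (convexHull ℝ _) = ⊤
    rw [affineSpan_convexHull]
    exact affineSpan_eq_top_of_nonempty_interior ⟨0, h0int⟩
  · -- unique interior lattice point
    apply Set.eq_singleton_iff_unique_mem.mpr
    constructor
    · exact ⟨h0int, fun i => ⟨0, by simp⟩⟩
    · rintro z ⟨hzi, hzl⟩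
      have hle : ∀ idx : WI d, dotp (wFun rP rQ idx) z ≤ 0 := by
        intro idx
        obtain ⟨k, hk⟩ := dotp_int (wFun_lattice rP rQ idx) hzl
        have hlt := interior_strict hzi idx
        rw [hk] at hlt ⊢
        have hk1 : k < 1 := by exact_mod_cast hlt
        have hk0 : k ≤ 0 := by omega
        exact_mod_cast hk0
      have ht1 := hle .top
      have ht2 := hle .bot
      rw [show wFun rP rQ WI.top
        = (Fin.snoc (0 : Fin d → ℝ) (1:ℝ) : Fin (d+1) → ℝ) from rfl, dotp_eval_init] at ht1
      rw [show wFun rP rQ WI.bot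
        = (Fin.snoc (0 : Fin d → ℝ) (-1:ℝ) : Fin (d+1) → ℝ) from rfl, dotp_eval_init] at ht2
      simp only [Pi.zero_apply, zero_mul, Finset.sum_const_zero, zero_add, one_mul,
        neg_one_mul, neg_mul] at ht1 ht2
      have htz : z (Fin.last d) = 0 := le_antisymm ht1 (by linarith)
      have hxz : ∀ i : Fin d, Fin.init z i = 0 := by
        intro i
        have h1 := hle (.upper i)
        have h2 := hle (.lower i)
        rw [show wFun rP rQ (WI.upper i) = (Fin.snoc
          (fun k => if k = i then (2:ℝ) else 0) (-1:ℝ) : Fin (d+1) → ℝ) from rfl,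
          dotp_eval_init] at h1
        rw [show wFun rP rQ (WI.lower i) = (Fin.snoc
          (fun k => if k = i then (-2:ℝ) else 0) (1:ℝ) : Fin (d+1) → ℝ) from rfl,
          dotp_eval_init] at h2
        rw [sum_single_mul] at h1 h2
        rw [htz] at h1 h2
        simp only [mul_zero, add_zero, one_mul, neg_one_mul, neg_zero] at h1 h2
        linarith
      funext k
      refine Fin.lastCases ?_ (fun i => ?_) k
      · exact htz
      · exact hxz i
  · -- the dual polytope
    classical
    refine ⟨Finset.image (wFun rP rQ) Finset.univ, ?_, ?_⟩
    · intro v hv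
      obtain ⟨idx, _, rfl⟩ := Finset.mem_image.mp hv
      exact wFun_lattice rP rQ idx
    · have hVcoe : ((Finset.image (wFun rP rQ) Finset.univ : Finset (Fin (d+1) → ℝ)) :
          Set (Fin (d+1) → ℝ)) = Set.range (wFun rP rQ) := by
        rw [Finset.coe_image, Finset.coe_univ, Set.image_univ]
      rw [hVcoe]
      apply Set.Subset.antisymm
      · -- dual ⊆ hull, by separation
        intro a ha
        by_contra hna
        have hfin : (Set.range (wFun rP rQ)).Finite := Set.finite_range _
        have hconv := convex_convexHull ℝ (Set.range (wFun rP rQ))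
        have hclosed := (hfin.isCompact_convexHull (𝕜 := ℝ)).isClosed
        obtain ⟨f, u, hfu, hua⟩ := geometric_hahn_banach_closed_point hconv hclosed hna
        have h0hull : (0 : Fin (d+1) → ℝ) ∈ convexHull ℝ (Set.range (wFun rP rQ)) := by
          have hzero : (0 : Fin (d+1) → ℝ) =
              (1/2 : ℝ) • wFun rP rQ WI.top + (1/2 : ℝ) • wFun rP rQ WI.bot := by
            funext k
            refine Fin.lastCases ?_ (fun i => ?_) k <;>
              simp [wFun, Fin.snoc_last, Fin.snoc_castSucc] <;> norm_num
          rw [hzero]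
          exact hconv (subset_convexHull ℝ _ ⟨WI.top, rfl⟩)
            (subset_convexHull ℝ _ ⟨WI.bot, rfl⟩) (by norm_num) (by norm_num) (by norm_num)
        have hupos : 0 < u := by
          have := hfu 0 h0hull
          simpa using this
        have hrep : ∀ zz : Fin (d+1) → ℝ,
            f zz = ∑ i, zz i * f (fun j => if i = j then 1 else 0) := by
          intro zz
          conv_lhs => rw [pi_eq_sum_univ zz]
          rw [map_sum]
          exact Finset.sum_congr rfl fun i _ => by rw [map_smul]; simp
        set y0 : Fin (d+1) → ℝ := fun i => f (fun j => if i = j then 1 else 0) / u with hy0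
        have hdy : ∀ w : Fin (d+1) → ℝ, dotp w y0 = f w / u := by
          intro w
          unfold dotp
          rw [hrep w, Finset.sum_div]
          exact Finset.sum_congr rfl fun i _ => by rw [hy0, mul_div_assoc]
        have hy0mem : y0 ∈ OmegaPoly (orderPolytope rP) (chainPolytope rQ) := by
          apply complete hrefl htrans
          intro idx
          rw [hdy, div_le_one hupos]
          exact le_of_lt (hfu _ (subset_convexHull ℝ _ ⟨idx, rfl⟩))
        have hfinal := ha y0 hy0mem
        have : dotp a y0 ≤ 1 := hfinal
        rw [hdy, div_le_one hupos] at this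
        linarith
      · -- hull ⊆ dual
        have hdconv : Convex ℝ (dualPoly (OmegaPoly (orderPolytope rP) (chainPolytope rQ))) := by
          intro a ha b hb sa sb hsa hsb hsab
          intro y hy
          have hcomb : (∑ i, (sa • a + sb • b) i * y i)
              = sa * (∑ i, a i * y i) + sb * (∑ i, b i * y i) := by
            rw [Finset.mul_sum, Finset.mul_sum, ← Finset.sum_add_distrib]
            exact Finset.sum_congr rfl fun i _ => by
              simp only [Pi.add_apply, Pi.smul_apply, smul_eq_mul]; ring
          rw [hcomb]
          have h1 := mul_le_mul_of_nonneg_left (ha y hy) hsa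
          have h2 := mul_le_mul_of_nonneg_left (hb y hy) hsb
          linarith
        refine convexHull_min ?_ hdconv
        rintro w ⟨idx, rfl⟩
        intro y hy
        exact valid rP rQ idx y hy

end OmegaAux

end OmegaAux

/-- For any finite posets `P` and `Q` on `d` elements, `Ω(O_P, C_Q)` is a
Gorenstein Fano (reflexive) polytope of dimension `d+1`: it is full-dimensional
in `ℝ^{d+1}`, the origin is its unique interior lattice point, and its dual
polytope is integral. -/
theorem Omega_order_chain_reflexive (d : ℕ) (P Q : PartialOrder (Fin d)) :
    affineSpan ℝ (OmegaPoly (orderPolytope P.le) (chainPolytope Q.le)) = ⊤ ∧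
    interior (OmegaPoly (orderPolytope P.le) (chainPolytope Q.le)) ∩
        {x : Fin (d + 1) → ℝ | IsLatticePoint x} = {0} ∧
    ∃ V : Finset (Fin (d + 1) → ℝ), (∀ v ∈ V, IsLatticePoint v) ∧
      dualPoly (OmegaPoly (orderPolytope P.le) (chainPolytope Q.le)) =
        convexHull ℝ (V : Set (Fin (d + 1) → ℝ)) :=
  OmegaAux.main P.le Q.le (fun i => P.le_refl i)
    (fun {i j k} h1 h2 => P.le_trans i j k h1 h2)
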